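/- Eventual lower bound on the lower-LIL events: let 0 < η < 1 be real and let γ ≥ 2 be a natural number with (γ−1)/γ > η. Set n_r = γ^r, D_r(X) = S_{n_r}(X) − S_{n_{r−1}}(X), and for r large enough that log log n_r > 0 define A_r = {X ∈ 2^ℕ : D_r(X) − (n_r − n_{r−1})/2 > η·√((n_r/2)·log log n_r)}. Then there exists R ∈ ℕ such that for all r ≥ R, μ(A_r) > 1/r. -/

import Mathlib

open MeasureTheory Filter

/-- The sum of the first `n` coordinates of a point of Cantor space, as a real number. -/
noncomputable def coinSum (X : ℕ → Bool) (n : ℕ) : ℝ :=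
  ∑ i ∈ Finset.range n, ((X i).toNat : ℝ)

/-- `μ` is the fair-coin measure on Cantor space: the probability measure under which the
coordinates are i.i.d. Bernoulli(1/2), i.e. every finite cylinder determined by prescribing
the coordinates in a finite set `s` has measure `(1/2)^|s|`. -/
def IsFairCoin (μ : Measure (ℕ → Bool)) : Prop :=
  IsProbabilityMeasure μ ∧
    ∀ (s : Finset ℕ) (f : ℕ → Bool),
      μ {X | ∀ i ∈ s, X i = f i} = (1 / 2) ^ s.card
/-- The block increment `D_r(X) = S_{γ^r}(X) − S_{γ^{r−1}}(X)`. -/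
noncomputable def blockIncr (γ : ℕ) (r : ℕ) (X : ℕ → Bool) : ℝ :=
  coinSum X (γ ^ r) - coinSum X (γ ^ (r - 1))

/-- The lower-LIL event `A_r` for parameters `η` and `γ`, with `n_r = γ^r`:
the set of `X` with `D_r(X) − (n_r − n_{r−1})/2 > η √((n_r/2) log log n_r)`. -/
def lowerLILEvent (η : ℝ) (γ : ℕ) (r : ℕ) : Set (ℕ → Bool) :=
  {X | η * Real.sqrt ((γ ^ r / 2) * Real.log (Real.log (γ ^ r)))
        < blockIncr γ r X - ((γ ^ r : ℕ) - (γ ^ (r - 1) : ℕ) : ℝ) / 2}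



lemma aux_cube_ge {x : ℝ} (hx : 2 ≤ x) : x ≤ x^3 := by
  nlinarith [mul_nonneg (mul_nonneg (by linarith : (0:ℝ) ≤ x - 2) (by linarith : (0:ℝ) ≤ x)) (by linarith : (0:ℝ) ≤ x), mul_nonneg (by linarith : (0:ℝ) ≤ x - 2) (by linarith : (0:ℝ) ≤ x)]

lemma aux_final_log (E logr llg cc ee log4 : ℝ)
    (hEbound : E ≤ (1+cc)/2*(logr + llg) + 6*(1+1/ee) + 1)
    (h3 : log4 + (1+cc)/2*llg + 6*(1+1/ee) + 1 < (1-cc)/2*logr) :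
    E < logr - log4 := by linarith

lemma aux_exp_one_sub {y : ℝ} (h2 : y ≤ 1/2) :
    Real.exp (-(y + 2*y^2)) ≤ 1 - y := by
  have h1 : 1 ≤ (1-y) * Real.exp (y+2*y^2) := by
    nlinarith [Real.add_one_le_exp (y+2*y^2)]
  have hpos := Real.exp_pos (y+2*y^2)
  rw [Real.exp_neg, inv_le_iff_one_le_mul₀ hpos]
  linarith [h1]

lemma aux_central : ∀ n : ℕ, 1 ≤ n → (4:ℝ)^n ≤ 2 * Real.sqrt n * n.centralBinom := by
  intro n hn
  induction n with
  | zero => omega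
  | succ k ih =>
    rcases Nat.eq_or_lt_of_le hn with h1 | h1
    · simp [← h1, Nat.centralBinom]
      norm_num
    · have hk : 1 ≤ k := by omega
      have IH := ih hk
      have key : ((k:ℝ)+1) * ((k+1 : ℕ).centralBinom : ℝ)
          = 2 * (2*k+1) * (k.centralBinom : ℝ) := by
        exact_mod_cast congrArg (Nat.cast (R := ℝ)) (Nat.succ_mul_centralBinom_succ k)
      have hsq : Real.sqrt k ^ 2 = k := Real.sq_sqrt (by positivity)
      have hsq1 : Real.sqrt ((k:ℝ)+1) ^ 2 = (k:ℝ)+1 := Real.sq_sqrt (by positivity)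
      have hs0 : 0 ≤ Real.sqrt k := Real.sqrt_nonneg _
      have hs10 : 0 ≤ Real.sqrt ((k:ℝ)+1) := Real.sqrt_nonneg _
      have hkey : 2*((k:ℝ)+1) * Real.sqrt k ≤ (2*k+1) * Real.sqrt ((k:ℝ)+1) := by
        have hsq2 : (2*((k:ℝ)+1) * Real.sqrt k)^2 ≤ ((2*k+1) * Real.sqrt ((k:ℝ)+1))^2 := by
          nlinarith [hsq, hsq1, sq_nonneg ((k:ℝ))]
        exact (pow_le_pow_iff_left₀ (by positivity) (by positivity) (by norm_num)).mp hsq2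
      have hCpos : (0:ℝ) < k.centralBinom := by
        exact_mod_cast Nat.centralBinom_pos k
      have hk1pos : (0:ℝ) < (k:ℝ)+1 := by positivity
      have expand : ((k+1:ℕ).centralBinom : ℝ) = 2*(2*k+1)*(k.centralBinom:ℝ) / ((k:ℝ)+1) := by
        field_simp
        linarith [key]
      push_cast
      rw [expand, mul_div_assoc', le_div_iff₀ hk1pos]
      have step1 : (4:ℝ)^(k+1) * ((k:ℝ)+1) = (4*((k:ℝ)+1)) * 4^k := by ring
      have step2 : (4*((k:ℝ)+1)) * (4:ℝ)^k ≤ (4*((k:ℝ)+1)) * (2 * Real.sqrt k * k.centralBinom) :=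
        mul_le_mul_of_nonneg_left IH (by positivity)
      have step3 : (4*((k:ℝ)+1)) * (2 * Real.sqrt k * k.centralBinom)
          = (4*(k.centralBinom:ℝ)) * (2*((k:ℝ)+1) * Real.sqrt k) := by ring
      have step4 : (4*(k.centralBinom:ℝ)) * (2*((k:ℝ)+1) * Real.sqrt k)
          ≤ (4*(k.centralBinom:ℝ)) * ((2*k+1) * Real.sqrt ((k:ℝ)+1)) :=
        mul_le_mul_of_nonneg_left hkey (by positivity)
      calc (4:ℝ)^(k+1) * ((k:ℝ)+1) = (4*((k:ℝ)+1)) * 4^k := step1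
        _ ≤ (4*((k:ℝ)+1)) * (2 * Real.sqrt k * k.centralBinom) := step2
        _ = (4*(k.centralBinom:ℝ)) * (2*((k:ℝ)+1) * Real.sqrt k) := step3
        _ ≤ (4*(k.centralBinom:ℝ)) * ((2*k+1) * Real.sqrt ((k:ℝ)+1)) := step4
        _ = 2 * Real.sqrt ((k:ℝ)+1) * (2*(2*(k:ℝ)+1)*(k.centralBinom:ℝ)) := by ring

lemma aux_central_choose (m : ℕ) (hm : 1 ≤ m) :
    (2:ℝ)^m ≤ 4 * Real.sqrt m * (m.choose (m/2)) := by
  rcases Nat.even_or_odd m with ⟨n, hn⟩ | ⟨n, hn⟩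
  · -- m = 2n
    have hn1 : 1 ≤ n := by omega
    have h := aux_central n hn1
    have hdiv : m / 2 = n := by omega
    have hcb : n.centralBinom = m.choose (m/2) := by
      rw [hdiv, Nat.centralBinom]; congr 1; omega
    have h2m : (2:ℝ)^m = 4^n := by
      rw [show m = 2*n by omega, pow_mul]; norm_num
    rw [h2m, ← hcb]
    refine le_trans h ?_
    have : Real.sqrt n ≤ Real.sqrt m := Real.sqrt_le_sqrt (by exact_mod_cast by omega)
    nlinarith [Real.sqrt_nonneg (n:ℝ), Nat.centralBinom_pos n,
      (by exact_mod_cast Nat.centralBinom_pos n : (0:ℝ) < n.centralBinom)]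
  · -- m = 2n+1
    rcases Nat.eq_zero_or_pos n with h0 | hn1
    · subst h0
      have : m = 1 := by omega
      subst this
      simp [Nat.choose]
      norm_num
    · have h := aux_central n hn1
      have hdiv : m / 2 = n := by omega
      have hpascal : n.centralBinom ≤ m.choose (m/2) := by
        rw [hdiv, Nat.centralBinom]
        have : m = (2*n - 1) + 1 + 1 := by omega
        rw [show m = 2*n + 1 by omega]
        rw [show (2*n+1) = (2*n) + 1 by ring]
        calc (2*n).choose n ≤ (2*n).choose n + (2*n).choose (n+1) := Nat.le_add_right _ _
          _ = (2*n+1).choose (n+1) := (Nat.choose_succ_succ (2*n) n).symm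
          _ = (2*n+1).choose ((2*n+1) - (n+1)) := (Nat.choose_symm (by omega)).symm
          _ = (2*n+1).choose n := by congr 1; omega
      have h2m : (2:ℝ)^m = 2 * 4^n := by
        rw [show m = 2*n+1 by omega, pow_succ, pow_mul]; ring_nf
      have hsn : Real.sqrt n ≤ Real.sqrt m := Real.sqrt_le_sqrt (by exact_mod_cast by omega)
      have hcle : (n.centralBinom : ℝ) ≤ m.choose (m/2) := by exact_mod_cast hpascal
      have hCpos : (0:ℝ) < n.centralBinom := by exact_mod_cast Nat.centralBinom_pos n
      rw [h2m]
      nlinarith [Real.sqrt_nonneg (n:ℝ), Real.sqrt_nonneg (m:ℝ)]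

lemma aux_anti (m : ℕ) : ∀ {a b : ℕ}, m ≤ 2*a → a ≤ b → m.choose b ≤ m.choose a := by
  intro a b ha hab
  induction b, hab using Nat.le_induction with
  | base => exact le_refl _
  | succ b hab ih =>
    refine le_trans ?_ ih
    have key := Nat.choose_succ_right_eq m b
    have hmb : m - b ≤ b + 1 := by omega
    have : m.choose (b+1) * (b+1) ≤ m.choose b * (b+1) :=
      key ▸ Nat.mul_le_mul_left _ hmb
    exact Nat.le_of_mul_le_mul_right this (by omega)

lemma aux_ratio (m : ℕ) (hm : 1 ≤ m) :
    ∀ d : ℕ, 8*(d:ℕ) ≤ m →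
    (m.choose (m/2) : ℝ) * Real.exp (-(2*(d:ℝ)^2/m) - 32*(d:ℝ)^3/(m:ℝ)^2)
      ≤ (m.choose (m/2 + d) : ℝ) := by
  intro d
  induction d with
  | zero => intro _; simp
  | succ d ih =>
    intro h8
    have IH := ih (by omega)
    have hmpos : (0:ℝ) < m := by exact_mod_cast hm
    have hm0 : (m:ℝ) ≠ 0 := ne_of_gt hmpos
    set k := m/2 + d with hk
    have hkm : k + 1 ≤ m := by omega
    set z : ℝ := (4*(d:ℝ)+2)/m with hzdef
    have hz2 : z ≤ 1/2 := by
      rw [hzdef, div_le_iff₀ hmpos]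
      have : (8:ℝ)*d + 8 ≤ m := by exact_mod_cast h8
      linarith
    have cr_def : ((m/2 : ℕ):ℝ) = ((m/2 : ℕ):ℝ) := rfl
    have hcr1 : 2*((m/2 : ℕ):ℝ) ≤ (m:ℝ) := by exact_mod_cast (by omega : 2*(m/2) ≤ m)
    have hcr2 : (m:ℝ) ≤ 2*((m/2 : ℕ):ℝ) + 1 := by exact_mod_cast (by omega : m ≤ 2*(m/2) + 1)
    have hkr : (k:ℝ) = ((m/2:ℕ):ℝ) + d := by push_cast [hk]; ring
    have hk1pos : (0:ℝ) < (k:ℝ) + 1 := by positivity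
    -- step fraction inequality
    have hfrac : (1:ℝ) - z ≤ ((m:ℝ) - k)/((k:ℝ)+1) := by
      rw [le_div_iff₀ hk1pos, hzdef, hkr]
      have hd8 : (8:ℝ)*d + 8 ≤ m := by exact_mod_cast h8
      have hprod : ((m:ℝ) - 2*((m/2:ℕ):ℝ)) * (m:ℝ) ≥ 0 :=
        mul_nonneg (by linarith) hmpos.le
      have hp2 : (0:ℝ) ≤ (2*(d:ℝ)+1) * (2*((m/2:ℕ):ℝ) + 1 - m) :=
        mul_nonneg (by positivity) (by linarith)
      have key : ((1:ℝ) - (4*(d:ℝ)+2)/m) * (((m/2:ℕ):ℝ) + (d:ℝ) + 1) * m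
          ≤ ((m:ℝ) - (((m/2:ℕ):ℝ) + (d:ℝ))) * m := by
        have heq : ((1:ℝ) - (4*(d:ℝ)+2)/m) * (((m/2:ℕ):ℝ) + (d:ℝ) + 1) * m
            = ((m:ℝ) - (4*(d:ℝ)+2)) * (((m/2:ℕ):ℝ) + (d:ℝ) + 1) := by
          field_simp
        rw [heq]
        nlinarith [hprod, hp2, sq_nonneg ((d:ℝ)), Nat.cast_nonneg (α := ℝ) d]
      exact le_of_mul_le_mul_right key hmpos
    have hexpstep : Real.exp (-(z + 2*z^2)) ≤ ((m:ℝ) - k)/((k:ℝ)+1) := by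
      refine le_trans (aux_exp_one_sub hz2) hfrac
    -- choose recurrence
    have hchoosrec : (m.choose (k+1) : ℝ) = (m.choose k : ℝ) * (((m:ℝ) - k)/((k:ℝ)+1)) := by
      have := Nat.choose_succ_right_eq m k
      have hcast : (m.choose (k+1) : ℝ) * ((k:ℝ)+1) = (m.choose k : ℝ) * ((m:ℝ) - k) := by
        have hsub : ((m - k : ℕ):ℝ) = (m:ℝ) - k := by
          rw [Nat.cast_sub (by omega)]
        calc (m.choose (k+1) : ℝ) * ((k:ℝ)+1) = ((m.choose (k+1) * (k+1) : ℕ) : ℝ) := by push_cast; ring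
          _ = ((m.choose k * (m - k) : ℕ) : ℝ) := by rw [this]
          _ = (m.choose k : ℝ) * ((m:ℝ) - k) := by push_cast [hsub]; ring
      field_simp
      linarith [hcast]
    -- exponent inequality
    have hzval : z = (4*(d:ℝ)+2)/m := hzdef
    have hexpineq : -(2*((d:ℝ)+1)^2/m) - 32*((d:ℝ)+1)^3/(m:ℝ)^2
        ≤ (-(2*(d:ℝ)^2/m) - 32*(d:ℝ)^3/(m:ℝ)^2) + (-(z + 2*z^2)) := by
      rw [hzval]
      rw [div_pow]
      have hm2 : (0:ℝ) < (m:ℝ)^2 := by positivity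
      rw [show -(2*((d:ℝ)+1)^2/m) - 32*((d:ℝ)+1)^3/(m:ℝ)^2
          = (-(2*((d:ℝ)+1)^2*m) - 32*((d:ℝ)+1)^3)/(m:ℝ)^2 by field_simp]
      rw [show (-(2*(d:ℝ)^2/m) - 32*(d:ℝ)^3/(m:ℝ)^2) + (-((4*(d:ℝ)+2)/m + 2*((4*(d:ℝ)+2)^2/(m:ℝ)^2)))
          = (-(2*(d:ℝ)^2*m) - 32*(d:ℝ)^3 - (4*(d:ℝ)+2)*m - 2*(4*(d:ℝ)+2)^2)/(m:ℝ)^2 by field_simp; ring]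
      refine div_le_div_of_nonneg_right ?_ hm2.le
      nlinarith [sq_nonneg ((d:ℝ)), hmpos]
    -- combine
    have hmono := Real.exp_le_exp.mpr hexpineq
    rw [Real.exp_add] at hmono
    have hCpos : (0:ℝ) ≤ (m.choose (m/2) : ℝ) := by positivity
    have hC2pos : (0:ℝ) ≤ (m.choose k : ℝ) := by positivity
    have step1 : (m.choose (m/2) : ℝ) * Real.exp (-(2*((d:ℝ)+1)^2/m) - 32*((d:ℝ)+1)^3/(m:ℝ)^2)
        ≤ ((m.choose (m/2) : ℝ) * Real.exp (-(2*(d:ℝ)^2/m) - 32*(d:ℝ)^3/(m:ℝ)^2)) * Real.exp (-(z + 2*z^2)) := by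
      rw [mul_assoc]
      exact mul_le_mul_of_nonneg_left hmono hCpos
    have step2 : ((m.choose (m/2) : ℝ) * Real.exp (-(2*(d:ℝ)^2/m) - 32*(d:ℝ)^3/(m:ℝ)^2)) * Real.exp (-(z + 2*z^2))
        ≤ (m.choose k : ℝ) * Real.exp (-(z + 2*z^2)) :=
      mul_le_mul_of_nonneg_right IH (Real.exp_pos _).le
    have step3 : (m.choose k : ℝ) * Real.exp (-(z + 2*z^2)) ≤ (m.choose (k+1) : ℝ) := by
      rw [hchoosrec]
      exact mul_le_mul_of_nonneg_left hexpstep hC2pos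
    have final := le_trans (le_trans step1 step2) step3
    have hcast2 : ((d+1:ℕ):ℝ) = (d:ℝ)+1 := by push_cast; ring
    rw [show m/2 + (d+1) = k + 1 by omega]
    calc (m.choose (m/2) : ℝ) * Real.exp (-(2*((d+1:ℕ):ℝ)^2/m) - 32*((d+1:ℕ):ℝ)^3/(m:ℝ)^2)
        = (m.choose (m/2) : ℝ) * Real.exp (-(2*((d:ℝ)+1)^2/m) - 32*((d:ℝ)+1)^3/(m:ℝ)^2) := by
          rw [hcast2]
      _ ≤ (m.choose (k+1) : ℝ) := final

lemma aux_cyl_measurable (s : Finset ℕ) (f : ℕ → Bool) :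
    MeasurableSet {X : ℕ → Bool | ∀ i ∈ s, X i = f i} := by
  have : {X : ℕ → Bool | ∀ i ∈ s, X i = f i}
      = ⋂ i ∈ (s : Set ℕ), {X : ℕ → Bool | X i = f i} := by
    ext X; simp
  rw [this]
  refine MeasurableSet.biInter (Set.to_countable _) (fun i _ => ?_)
  have : {X : ℕ → Bool | X i = f i} = (fun X : ℕ → Bool => X i) ⁻¹' {f i} := rfl
  rw [this]
  exact (measurable_pi_apply i) (measurableSet_singleton _)

lemma aux_measure_lb (μ : Measure (ℕ → Bool)) (hμ : IsFairCoin μ) (s : Finset ℕ)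
    (𝒯 : Finset (Finset ℕ)) (h𝒯 : ∀ T ∈ 𝒯, T ⊆ s) (A : Set (ℕ → Bool))
    (hsub : ∀ T ∈ 𝒯, {X : ℕ → Bool | ∀ i ∈ s, X i = decide (i ∈ T)} ⊆ A) :
    (𝒯.card : ENNReal) * (1/2)^s.card ≤ μ A := by
  classical
  set cyl : Finset ℕ → Set (ℕ → Bool) :=
    fun T => {X : ℕ → Bool | ∀ i ∈ s, X i = decide (i ∈ T)} with hcyl_def
  have hdisj : (↑𝒯 : Set (Finset ℕ)).PairwiseDisjoint cyl := by
    intro T hT T' hT' hne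
    simp only [Function.onFun]
    rw [Set.disjoint_left]
    intro X hX hX'
    apply hne
    apply Finset.ext
    intro i
    constructor
    · intro hi
      have his : i ∈ s := h𝒯 T hT hi
      have := (hX i his).symm.trans (hX' i his)
      simpa [hi] using this.symm
    · intro hi
      have his : i ∈ s := h𝒯 T' hT' hi
      have := (hX i his).symm.trans (hX' i his)
      simp [hi] at this
      exact this
  have hmeasure : μ (⋃ T ∈ 𝒯, cyl T) = (𝒯.card : ENNReal) * (1/2)^s.card := by
    rw [measure_biUnion_finset hdisj (fun T _ => aux_cyl_measurable s _)]
    have : ∀ T ∈ 𝒯, μ (cyl T) = (1/2 : ENNReal)^s.card := fun T _ => hμ.2 s _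
    rw [Finset.sum_congr rfl this, Finset.sum_const, nsmul_eq_mul]
  calc (𝒯.card : ENNReal) * (1/2)^s.card = μ (⋃ T ∈ 𝒯, cyl T) := hmeasure.symm
    _ ≤ μ A := measure_mono (Set.iUnion₂_subset hsub)

set_option maxHeartbeats 2000000 in
/-- Eventual lower bound on the lower-LIL events: for `0 < η < 1` and a natural number
`γ ≥ 2` with `(γ − 1)/γ > η`, there is `R` such that `μ(A_r) > 1/r` for all `r ≥ R`. -/
theorem lowerLILEvent_measure_gt (μ : Measure (ℕ → Bool)) (hμ : IsFairCoin μ)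
    (η : ℝ) (hη0 : 0 < η) (hη1 : η < 1)
    (γ : ℕ) (hγ : 2 ≤ γ) (hγη : η < ((γ : ℝ) - 1) / γ) :
    ∃ R : ℕ, ∀ r : ℕ, R ≤ r →
      1 / (r : ENNReal) < μ (lowerLILEvent η γ r) := by
  classical
  have hγR : (2:ℝ) ≤ (γ:ℝ) := by exact_mod_cast hγ
  have hγ1 : (1:ℝ) < (γ:ℝ) := by linarith
  have hγm1 : (0:ℝ) < (γ:ℝ) - 1 := by linarith
  have hγ0 : (0:ℝ) < (γ:ℝ) := by linarith
  set c : ℝ := η^2*(γ:ℝ)/((γ:ℝ)-1) with hc_def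
  have hc_pos : 0 < c := by rw [hc_def]; positivity
  have hηγ : η * (γ:ℝ) < (γ:ℝ) - 1 := by
    rw [lt_div_iff₀ hγ0] at hγη; linarith
  have hc1 : c < 1 := by
    rw [hc_def, div_lt_one hγm1]; nlinarith
  set ε : ℝ := (1-c)/(2*c) with hε_def
  have hε : 0 < ε := by
    rw [hε_def]; apply div_pos (by linarith) (by linarith)
  have hεc : (1+ε)*c = (1+c)/2 := by
    rw [hε_def]; field_simp; ring
  set llγ : ℝ := Real.log (Real.log γ) with hllγ_def
  set K' : ℝ := Real.log 4 + (1+c)/2 * llγ + 6*(1+1/ε) + 1 with hK'_def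
  have hlogγ : 0 < Real.log γ := Real.log_pos hγ1
  have ev1 : ∀ᶠ r : ℕ in atTop, 2 ≤ r := eventually_ge_atTop 2
  have ev4 : ∀ᶠ r : ℕ in atTop, (γ:ℕ) ≤ r := eventually_ge_atTop γ
  have ev2' : ∀ᶠ r : ℕ in atTop, ((r:ℝ))^3/(2:ℝ)^r < 1/800000000 :=
    (tendsto_pow_const_div_const_pow_of_one_lt 3 one_lt_two).eventually_lt_const (by norm_num)
  have ev2 : ∀ᶠ r : ℕ in atTop, (100000000:ℝ)*((r:ℝ)+γ)^3 ≤ (γ:ℝ)^r := by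
    filter_upwards [ev1, ev4, ev2'] with r h1 h4 h2'
    have hrR : (γ:ℝ) ≤ (r:ℝ) := by exact_mod_cast h4
    have hrpos : (0:ℝ) ≤ (r:ℝ) := by positivity
    have h2pos : (0:ℝ) < 2^r := by positivity
    rw [div_lt_iff₀ h2pos] at h2'
    have hof : ((r:ℝ)+γ)^3 ≤ (2*(r:ℝ))^3 :=
      pow_le_pow_left₀ (by positivity) (by linarith) 3
    have h2γ : (2:ℝ)^r ≤ (γ:ℝ)^r := pow_le_pow_left₀ (by norm_num) hγR r
    calc (100000000:ℝ)*((r:ℝ)+γ)^3 ≤ 100000000*(2*(r:ℝ))^3 := by linarith [hof]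
      _ = 800000000*(r:ℝ)^3 := by ring
      _ ≤ (2:ℝ)^r := by linarith [h2']
      _ ≤ (γ:ℝ)^r := h2γ
  have ev3 : ∀ᶠ r : ℕ in atTop, K' < (1-c)/2 * Real.log r := by
    have tlog : Tendsto (fun r:ℕ => Real.log r) atTop atTop :=
      Real.tendsto_log_atTop.comp tendsto_natCast_atTop_atTop
    filter_upwards [tlog.eventually_gt_atTop (2/(1-c)*K')] with r hr
    have h1c : (0:ℝ) < 1 - c := by linarith
    have heq : (1-c)/2 * (2/(1-c)*K') = K' := by field_simp
    calc K' = (1-c)/2 * (2/(1-c)*K') := heq.symm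
      _ < (1-c)/2 * Real.log r := by
          exact mul_lt_mul_of_pos_left hr (by linarith)
  have main : ∀ᶠ r : ℕ in atTop, 1 / (r : ENNReal) < μ (lowerLILEvent η γ r) := by
    filter_upwards [ev1, ev2, ev3] with r h1 h2 h3
    -- ## natural number setup
    have hr1 : 1 ≤ r := by omega
    set n' : ℕ := γ^(r-1) with hn'_def
    set nn : ℕ := γ^r with hnn_def
    have hnn' : nn = γ * n' := by
      rw [hnn_def, hn'_def, ← pow_succ']
      congr 1
      omega
    have hn'pos : 0 < n' := pow_pos (by omega) _
    have hle : n' ≤ nn := by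
      rw [hnn']
      exact Nat.le_mul_of_pos_left _ (by omega)
    set m : ℕ := nn - n' with hm_def
    have hmR : (m:ℝ) = (nn:ℝ) - (n':ℝ) := by
      rw [hm_def]; exact Nat.cast_sub hle
    set N : ℝ := (γ:ℝ)^r with hN_def
    have hNnn : ((nn:ℕ):ℝ) = N := by rw [hnn_def, hN_def]; push_cast; ring
    have hN1 : 1 ≤ N := by rw [hN_def]; exact one_le_pow₀ (le_of_lt hγ1)
    have hkeyR : (γ:ℝ)*(m:ℝ) = ((γ:ℝ)-1)*N := by
      have h1 : (nn:ℝ) = (γ:ℝ) * (n':ℝ) := by exact_mod_cast hnn'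
      rw [hmR, ← hNnn]
      linarith [h1]
    have hNpos : 0 < N := by linarith
    have hmN2 : N ≤ 2*(m:ℝ) := by
      have h5 : (γ:ℝ)*(2*(m:ℝ) - N) = ((γ:ℝ)-2)*N := by linear_combination 2*hkeyR
      have h7 : 0 ≤ ((γ:ℝ)-2)*N := mul_nonneg (by linarith) hNpos.le
      by_contra hcon
      push_neg at hcon
      have h6 : 0 < (γ:ℝ)*(N - 2*(m:ℝ)) := mul_pos hγ0 (by linarith)
      have h8 : (γ:ℝ)*(N - 2*(m:ℝ)) = -((γ:ℝ)*(2*(m:ℝ) - N)) := by ring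
      rw [h8, h5] at h6
      linarith
    have hrγ2 : (2:ℝ) ≤ (r:ℝ) + γ := by
      have : (1:ℝ) ≤ (r:ℝ) := by exact_mod_cast hr1
      linarith
    have hbig : (100000000:ℝ)*((r:ℝ)+γ)^3 ≤ N := h2
    have hcube8 : (8:ℝ) ≤ ((r:ℝ)+γ)^3 := by
      have := pow_le_pow_left₀ (by norm_num : (0:ℝ) ≤ 2) hrγ2 3
      norm_num at this
      linarith
    have hm9R : (9:ℝ) ≤ (m:ℝ) := by linarith [hbig, hmN2]
    have hmRpos : (0:ℝ) < m := by linarith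
    have hm1 : 1 ≤ m := by exact_mod_cast (by linarith : (1:ℝ) ≤ (m:ℝ))
    -- ## logs
    have hrRpos : (0:ℝ) < r := by exact_mod_cast (by omega : 0 < r)
    have hlogN : Real.log N = r * Real.log γ := by rw [hN_def]; exact Real.log_pow (γ:ℝ) r
    set L : ℝ := Real.log (Real.log N) with hL_def
    have hL_eq : L = Real.log r + llγ := by
      rw [hL_def, hlogN, Real.log_mul (by positivity) (ne_of_gt hlogγ), hllγ_def]
    have hrlog1 : (1:ℝ) ≤ r * Real.log γ := by
      have hl2 : (0.6931471803:ℝ) < Real.log 2 := Real.log_two_gt_d9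
      have hlog2γ : Real.log 2 ≤ Real.log γ := Real.log_le_log (by norm_num) hγR
      have hr2 : (2:ℝ) ≤ (r:ℝ) := by exact_mod_cast h1
      have hml := mul_le_mul hr2 hlog2γ (by linarith) (by linarith)
      linarith
    have hL0 : 0 ≤ L := by
      rw [hL_def, hlogN]
      exact Real.log_nonneg hrlog1
    have hLrγ : L ≤ (r:ℝ) + γ := by
      rw [hL_eq, hllγ_def]
      have e1 : Real.log r ≤ (r:ℝ) - 1 := Real.log_le_sub_one_of_pos hrRpos
      have e2 : Real.log (Real.log γ) ≤ Real.log γ - 1 := Real.log_le_sub_one_of_pos hlogγ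
      have e3 : Real.log γ ≤ (γ:ℝ) - 1 := Real.log_le_sub_one_of_pos hγ0
      linarith
    -- ## t and sqrt quantities
    set t : ℝ := η * Real.sqrt ((N/2) * L) with ht_def
    have ht0 : 0 ≤ t := mul_nonneg hη0.le (Real.sqrt_nonneg _)
    have ht2 : t^2 = η^2 * ((N/2)*L) := by
      rw [ht_def, mul_pow, Real.sq_sqrt (by positivity)]
    set u : ℝ := Real.sqrt m with hu_def
    have hu0 : 0 ≤ u := Real.sqrt_nonneg _
    have hu2 : u^2 = m := Real.sq_sqrt hmRpos.le
    have hu3 : 3 ≤ u := by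
      rw [hu_def, show (3:ℝ) = Real.sqrt 9 by
        rw [show (9:ℝ) = 3^2 by norm_num, Real.sqrt_sq]; norm_num]
      exact Real.sqrt_le_sqrt hm9R
    set W : ℝ := Real.sqrt (N*((r:ℝ)+γ)) with hW_def
    have hW2 : W^2 = N*((r:ℝ)+γ) := Real.sq_sqrt (by positivity)
    have hW0 : 0 ≤ W := Real.sqrt_nonneg _
    have hW1 : 1 ≤ W := by
      rw [hW_def, show (1:ℝ) = Real.sqrt 1 by rw [Real.sqrt_one]]
      refine Real.sqrt_le_sqrt ?_
      have : (1:ℝ)*1 ≤ N*((r:ℝ)+γ) := mul_le_mul hN1 (by linarith) (by norm_num) (by linarith)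
      linarith
    have ht_le_W : t ≤ W := by
      rw [ht_def, hW_def]
      calc η * Real.sqrt ((N/2)*L) ≤ 1 * Real.sqrt ((N/2)*L) :=
            mul_le_mul_of_nonneg_right hη1.le (Real.sqrt_nonneg _)
        _ = Real.sqrt ((N/2)*L) := one_mul _
        _ ≤ Real.sqrt (N*((r:ℝ)+γ)) := by
            refine Real.sqrt_le_sqrt ?_
            have e1 : (N/2)*L ≤ (N/2)*((r:ℝ)+γ) := mul_le_mul_of_nonneg_left hLrγ (by positivity)
            have e2 : (0:ℝ) ≤ N*((r:ℝ)+γ) := mul_nonneg hNpos.le (by linarith)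
            linarith
    have hmleN : (m:ℝ) ≤ N := by
      by_contra hcon
      push_neg at hcon
      have h6 : 0 < (γ:ℝ)*((m:ℝ) - N) := mul_pos hγ0 (by linarith)
      have h8 : (γ:ℝ)*((m:ℝ) - N) = (γ:ℝ)*(m:ℝ) - (γ:ℝ)*N := by ring
      rw [h8, hkeyR] at h6
      linarith
    have hu_le_W : u ≤ W := by
      rw [hu_def, hW_def]
      apply Real.sqrt_le_sqrt
      have e2 : (0:ℝ) ≤ N*((r:ℝ)+γ-1) := mul_nonneg hNpos.le (by linarith)
      have e3 : N*((r:ℝ)+γ-1) = N*((r:ℝ)+γ) - N := by ring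
      linarith [hmleN, e3 ▸ e2]
    -- ## the integer quantities
    set c₀ : ℕ := m/2 with hc₀_def
    set D : ℕ := Nat.sqrt m with hD_def
    set k₀ : ℕ := ⌊(m:ℝ)/2 + t⌋₊ + 1 with hk₀_def
    set k₁ : ℕ := k₀ + D with hk₁_def
    have hc₀1 : 2*(c₀:ℝ) ≤ (m:ℝ) := by exact_mod_cast (by omega : 2*(m/2) ≤ m)
    have hc₀2 : (m:ℝ) ≤ 2*(c₀:ℝ)+1 := by exact_mod_cast (by omega : m ≤ 2*(m/2)+1)
    have hc₀fl : c₀ ≤ ⌊(m:ℝ)/2 + t⌋₊ := by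
      apply Nat.le_floor
      have : (c₀:ℝ) ≤ (m:ℝ)/2 := by linarith
      linarith
    have hc₀k₀ : c₀ + 1 ≤ k₀ := by omega
    set dd : ℕ := k₁ - c₀ with hdd_def
    have hk₁dd : k₁ = c₀ + dd := by omega
    have hddR : (dd:ℝ) = (k₁:ℝ) - (c₀:ℝ) := by
      rw [hdd_def]; exact_mod_cast Nat.cast_sub (by omega)
    have hflR : ((⌊(m:ℝ)/2 + t⌋₊ : ℕ):ℝ) ≤ (m:ℝ)/2 + t := Nat.floor_le (by positivity)
    have hk₀R : (k₀:ℝ) ≤ (m:ℝ)/2 + t + 1 := by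
      rw [hk₀_def]; push_cast; linarith
    have hDR : (D:ℝ) ≤ u := by
      rw [hu_def, show (D:ℝ) = Real.sqrt ((D:ℝ)^2) by rw [Real.sqrt_sq (by positivity)]]
      apply Real.sqrt_le_sqrt
      exact_mod_cast Nat.sqrt_le' m
    have hDu1 : u ≤ (D:ℝ) + 1 := by
      rw [hu_def, show (D:ℝ)+1 = Real.sqrt (((D:ℝ)+1)^2) by rw [Real.sqrt_sq (by positivity)]]
      apply Real.sqrt_le_sqrt
      have := Nat.lt_succ_sqrt m
      have hcast : (m:ℝ) < ((Nat.sqrt m:ℝ)+1) * ((Nat.sqrt m:ℝ)+1) := by exact_mod_cast this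
      have h14 : ((D:ℝ)+1)^2 = ((Nat.sqrt m:ℝ)+1)*((Nat.sqrt m:ℝ)+1) := by
        rw [hD_def]; ring
      rw [h14]
      linarith [hcast]
    have hk₁R : (k₁:ℝ) = (k₀:ℝ) + D := by rw [hk₁_def]; push_cast; ring
    have hdd_le : (dd:ℝ) ≤ t + u + 2 := by
      rw [hddR, hk₁R]; linarith [hDR, hk₀R, hc₀2]
    have hdd_W : (dd:ℝ) ≤ 4*W := by
      have : (2:ℝ) ≤ 2*W := by linarith
      linarith [hdd_le, ht_le_W, hu_le_W]
    have hdd0 : (0:ℝ) ≤ (dd:ℝ) := by positivity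
    -- ## size conditions
    have hrγ0 : (0:ℝ) ≤ (r:ℝ)+γ := by linarith
    have h4096 : 4096*((r:ℝ)+γ) ≤ N := by
      have h9 : ((r:ℝ)+γ) ≤ ((r:ℝ)+γ)^3 := aux_cube_ge hrγ2
      linarith [hbig]
    have hNsq : N^2 ≤ 4*(m:ℝ)^2 := by
      have h10 := pow_le_pow_left₀ hNpos.le hmN2 2
      have h11 : (2*(m:ℝ))^2 = 4*(m:ℝ)^2 := by ring
      rw [h11] at h10
      exact h10
    have hW32 : 32*W ≤ (m:ℝ) := by
      have hm32 : N*((r:ℝ)+γ) ≤ ((m:ℝ)/32)^2 := by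
        have hNN : 4096*((r:ℝ)+γ)*N ≤ N^2 := by
          have := mul_le_mul_of_nonneg_right h4096 hNpos.le
          linarith
        have h12 : ((m:ℝ)/32)^2 = (m:ℝ)^2/1024 := by ring
        rw [h12]
        linarith [hNN, hNsq]
      have : W ≤ (m:ℝ)/32 := by
        rw [hW_def, show (m:ℝ)/32 = Real.sqrt (((m:ℝ)/32)^2) by
          rw [Real.sqrt_sq (by positivity)]]
        exact Real.sqrt_le_sqrt hm32
      linarith
    have h8dd : 8*dd ≤ m := by
      have : 8*(dd:ℝ) ≤ (m:ℝ) := by linarith [hdd_W, hW32]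
      exact_mod_cast this
    have hds : 32*(dd:ℝ)^3 ≤ (m:ℝ)^2 := by
      have hA : (8192*(W*((r:ℝ)+γ)))^2 ≤ N^2 := by
        have hcube : (8192:ℝ)^2 * (N*((r:ℝ)+γ)) * ((r:ℝ)+γ)^2 ≤ N^2 := by
          have h30 : (0:ℝ) ≤ ((r:ℝ)+γ)^3 := by positivity
          have h67 : (67108864:ℝ)*((r:ℝ)+γ)^3 ≤ N := by linarith [hbig]
          have h68 := mul_le_mul_of_nonneg_right h67 hNpos.le
          calc (8192:ℝ)^2 * (N*((r:ℝ)+γ)) * ((r:ℝ)+γ)^2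
              = 67108864*((r:ℝ)+γ)^3*N := by ring
            _ ≤ N*N := h68
            _ = N^2 := by ring
        calc (8192*(W*((r:ℝ)+γ)))^2 = 8192^2 * W^2 * ((r:ℝ)+γ)^2 := by ring
          _ = 8192^2 * (N*((r:ℝ)+γ)) * ((r:ℝ)+γ)^2 := by rw [hW2]
          _ ≤ N^2 := hcube
      have hB : 8192*(W*((r:ℝ)+γ)) ≤ N := by
        have h0 : (0:ℝ) ≤ 8192*(W*((r:ℝ)+γ)) := by positivity
        exact (pow_le_pow_iff_left₀ h0 hNpos.le (by norm_num)).mp hA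
      have hdd3 : (dd:ℝ)^3 ≤ (4*W)^3 := pow_le_pow_left₀ hdd0 hdd_W 3
      have hW3 : (4*W)^3 = 64*(W*(N*((r:ℝ)+γ))) := by
        rw [show (4*W)^3 = 64*(W*W^2) by ring, hW2]
      have hBN : 8192*(W*((r:ℝ)+γ))*(N/4) ≤ N*(N/4) :=
        mul_le_mul_of_nonneg_right hB (by positivity)
      have hNm : N*(N/4) ≤ (m:ℝ)^2 := by
        have h13 : N*(N/4) = N^2/4 := by ring
        rw [h13]; linarith [hNsq]
      calc 32*(dd:ℝ)^3 ≤ 32*(4*W)^3 := by linarith [hdd3]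
        _ = 2048*(W*(N*((r:ℝ)+γ))) := by rw [hW3]; ring
        _ = 8192*(W*((r:ℝ)+γ))*(N/4) := by ring
        _ ≤ N*(N/4) := hBN
        _ ≤ (m:ℝ)^2 := hNm
    -- ## the exponent bound
    set E : ℝ := 2*(dd:ℝ)^2/m + 32*(dd:ℝ)^3/(m:ℝ)^2 with hE_def
    have hE2 : 32*(dd:ℝ)^3/(m:ℝ)^2 ≤ 1 := by
      rw [div_le_one (by positivity)]; exact hds
    have hEt : 2*t^2/(m:ℝ) = c*L := by
      rw [ht2, hc_def]
      field_simp
      first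
      | linear_combination η^2*L*hkeyR
      | linear_combination (-(η^2*L))*hkeyR
      | linear_combination (2*η^2*L)*hkeyR
      | linear_combination (-(2*η^2*L))*hkeyR
      | linear_combination (-L)*hkeyR
    have hAMGM : (t+(u+2))^2 ≤ (1+ε)*t^2 + (1+1/ε)*(u+2)^2 := by
      have key : (0:ℝ) ≤ (ε*t - (u+2))^2/ε := div_nonneg (sq_nonneg _) hε.le
      have expand : (ε*t - (u+2))^2/ε = ε*t^2 - 2*t*(u+2) + (1/ε)*(u+2)^2 := by
        field_simp
        ring
      have key2 : 0 ≤ ε*t^2 - 2*t*(u+2) + (1/ε)*(u+2)^2 := expand ▸ key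
      linarith [key2]
    have hdd2m : 2*(dd:ℝ)^2/m ≤ ((1+ε)*(2*t^2) + (1+1/ε)*(2*(u+2)^2))/m := by
      apply div_le_div_of_nonneg_right _ hmRpos.le
      have h1' : (dd:ℝ)^2 ≤ (t + (u+2))^2 :=
        pow_le_pow_left₀ hdd0 (by linarith [hdd_le]) 2
      linarith [h1', hAMGM]
    have hu22 : (u+2)^2 ≤ 3*(m:ℝ) := by linarith [hu3, hu2, sq_nonneg (u-3)]
    have hEbound : E ≤ (1+c)/2 * L + 6*(1+1/ε) + 1 := by
      have e1 : ((1+ε)*(2*t^2) + (1+1/ε)*(2*(u+2)^2))/m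
          = (1+ε)*(2*t^2/m) + (1+1/ε)*(2*(u+2)^2/m) := by ring
      have e2 : (1+ε)*(2*t^2/m) = (1+c)/2 * L := by rw [hEt, ← hεc]; ring
      have e3 : (1+1/ε)*(2*(u+2)^2/m) ≤ 6*(1+1/ε) := by
        have hpos : (0:ℝ) ≤ 1+1/ε := by positivity
        have h6' : 2*(u+2)^2/m ≤ 6 := by
          rw [div_le_iff₀ hmRpos]; linarith [hu22]
        have := mul_le_mul_of_nonneg_left h6' hpos
        linarith
      rw [hE_def]
      calc 2*(dd:ℝ)^2/m + 32*(dd:ℝ)^3/(m:ℝ)^2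
          ≤ ((1+ε)*(2*t^2) + (1+1/ε)*(2*(u+2)^2))/m + 1 := by linarith [hdd2m, hE2]
        _ = (1+ε)*(2*t^2/m) + (1+1/ε)*(2*(u+2)^2/m) + 1 := by rw [e1]
        _ ≤ (1+c)/2 * L + 6*(1+1/ε) + 1 := by rw [e2]; linarith [e3]
    have hElog : E < Real.log r - Real.log 4 := by
      rw [hL_eq] at hEbound
      rw [hK'_def] at h3
      exact aux_final_log E (Real.log r) llγ c ε (Real.log 4) hEbound h3
    -- ## the counting family
    set s : Finset ℕ := Finset.Ico n' nn with hs_def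
    have hscard : s.card = m := by rw [hs_def, Nat.card_Ico]
    set 𝒯 : Finset (Finset ℕ) := (Finset.Icc k₀ k₁).biUnion (fun k => Finset.powersetCard k s)
      with h𝒯_def
    have hTmem : ∀ T ∈ 𝒯, T ⊆ s ∧ k₀ ≤ T.card ∧ T.card ≤ k₁ := by
      intro T hT
      rw [h𝒯_def, Finset.mem_biUnion] at hT
      obtain ⟨k, hk, hTk⟩ := hT
      rw [Finset.mem_powersetCard] at hTk
      rw [Finset.mem_Icc] at hk
      exact ⟨hTk.1, hTk.2 ▸ hk.1, hTk.2 ▸ hk.2⟩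
    have hcard𝒯 : 𝒯.card = ∑ k ∈ Finset.Icc k₀ k₁, m.choose k := by
      rw [h𝒯_def, Finset.card_biUnion]
      · apply Finset.sum_congr rfl
        intro k _
        rw [Finset.card_powersetCard, hscard]
      · intro x _ y _ hxy
        rw [Function.onFun, Finset.disjoint_left]
        intro T hTx hTy
        rw [Finset.mem_powersetCard] at hTx hTy
        exact hxy (hTx.2.symm.trans hTy.2)
    have hmono_sum : (D+1) * m.choose k₁ ≤ 𝒯.card := by
      rw [hcard𝒯]
      have hcount : (Finset.Icc k₀ k₁).card = D + 1 := by rw [Nat.card_Icc]; omega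
      have hper : ∀ k ∈ Finset.Icc k₀ k₁, m.choose k₁ ≤ m.choose k := by
        intro k hk
        rw [Finset.mem_Icc] at hk
        exact aux_anti m (by omega) hk.2
      calc (D+1) * m.choose k₁ = (Finset.Icc k₀ k₁).card • m.choose k₁ := by
            rw [hcount, smul_eq_mul]
        _ ≤ ∑ k ∈ Finset.Icc k₀ k₁, m.choose k := Finset.card_nsmul_le_sum _ _ _ hper
    -- ## the real inequality
    have hchoose_lb := aux_ratio m hm1 dd h8dd
    have hcentral := aux_central_choose m hm1
    rw [← hu_def] at hcentral
    have hck : m/2 + dd = k₁ := by omega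
    rw [hck] at hchoose_lb
    have hexp_arg : (-(2*(dd:ℝ)^2/(m:ℝ)) - 32*(dd:ℝ)^3/(m:ℝ)^2) = -E := by
      rw [hE_def]; ring
    rw [hexp_arg] at hchoose_lb
    have hupos : (0:ℝ) < u := by linarith
    have hu4 : (0:ℝ) < 4*u := by linarith
    have hBc : (2:ℝ)^m/(4*u) ≤ (m.choose (m/2) : ℝ) := by
      rw [div_le_iff₀ hu4]
      linarith [hcentral]
    have hc2R : u * ((m.choose (m/2):ℝ) * Real.exp (-E)) ≤ u * (m.choose k₁:ℝ) :=
      mul_le_mul_of_nonneg_left hchoose_lb hu0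
    have hc3R : u * ((2:ℝ)^m/(4*u) * Real.exp (-E)) ≤ u * ((m.choose (m/2):ℝ) * Real.exp (-E)) :=
      mul_le_mul_of_nonneg_left
        (mul_le_mul_of_nonneg_right hBc (Real.exp_pos _).le) hu0
    have hval : u * ((2:ℝ)^m/(4*u) * Real.exp (-E)) = (2:ℝ)^m * Real.exp (-E)/4 := by
      field_simp
    have hc1R : u * (m.choose k₁:ℝ) ≤ ((D:ℝ)+1) * (m.choose k₁:ℝ) :=
      mul_le_mul_of_nonneg_right hDu1 (by positivity)
    have hcardR : ((D:ℝ)+1) * (m.choose k₁:ℝ) ≤ (𝒯.card:ℝ) := by exact_mod_cast hmono_sum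
    have hchain : (2:ℝ)^m * Real.exp (-E)/4 ≤ (𝒯.card:ℝ) := by
      rw [← hval]
      linarith [hc3R, hc2R, hc1R, hcardR]
    have h2m1 : (2:ℝ)^m * ((1:ℝ)/2)^m = 1 := by
      rw [← mul_pow]; norm_num
    have hfin1 : (2:ℝ)^m * Real.exp (-E)/4 * ((1:ℝ)/2)^m ≤ (𝒯.card:ℝ)*((1:ℝ)/2)^m :=
      mul_le_mul_of_nonneg_right hchain (by positivity)
    have hsimpl : (2:ℝ)^m * Real.exp (-E)/4 * ((1:ℝ)/2)^m = Real.exp (-E)/4 := by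
      calc (2:ℝ)^m * Real.exp (-E)/4 * ((1:ℝ)/2)^m
          = ((2:ℝ)^m * ((1:ℝ)/2)^m) * (Real.exp (-E)/4) := by ring
        _ = Real.exp (-E)/4 := by rw [h2m1, one_mul]
    have hexpE : 4/(r:ℝ) < Real.exp (-E) := by
      have h4r : Real.log 4 - Real.log r = Real.log (4/(r:ℝ)) :=
        (Real.log_div (by norm_num) (ne_of_gt hrRpos)).symm
      have hlt : Real.log (4/(r:ℝ)) < -E := by rw [← h4r]; linarith [hElog]
      calc 4/(r:ℝ) = Real.exp (Real.log (4/(r:ℝ))) := (Real.exp_log (by positivity)).symm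
        _ < Real.exp (-E) := Real.exp_lt_exp.mpr hlt
    have hreal : (1:ℝ)/r < (𝒯.card:ℝ)*((1:ℝ)/2)^m := by
      have h1r : (1:ℝ)/r < Real.exp (-E)/4 := by
        calc (1:ℝ)/r = (4/(r:ℝ))/4 := by ring
          _ < Real.exp (-E)/4 := by gcongr
      calc (1:ℝ)/r < Real.exp (-E)/4 := h1r
        _ = (2:ℝ)^m * Real.exp (-E)/4 * ((1:ℝ)/2)^m := hsimpl.symm
        _ ≤ (𝒯.card:ℝ)*((1:ℝ)/2)^m := hfin1
    -- ## event containment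
    have hsub : ∀ T ∈ 𝒯, {X : ℕ → Bool | ∀ i ∈ s, X i = decide (i ∈ T)}
        ⊆ lowerLILEvent η γ r := by
      intro T hT X hX
      obtain ⟨hTs, hval1, _⟩ := hTmem T hT
      have hblock : blockIncr γ r X = (T.card : ℝ) := by
        show coinSum X (γ^r) - coinSum X (γ^(r-1)) = (T.card:ℝ)
        rw [show γ^r = nn from rfl, show γ^(r-1) = n' from rfl]
        rw [coinSum, coinSum, ← Finset.sum_Ico_eq_sub _ hle]
        have hcongr : ∀ i ∈ Finset.Ico n' nn, ((X i).toNat:ℝ) = if i ∈ T then (1:ℝ) else 0 := by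
          intro i hi
          have his : i ∈ s := by rw [hs_def]; exact hi
          rw [hX i his]
          by_cases hiT : i ∈ T <;> simp [hiT]
        rw [Finset.sum_congr rfl hcongr]
        rw [show Finset.Ico n' nn = s from hs_def.symm]
        rw [Finset.sum_ite_mem, Finset.inter_eq_right.mpr hTs, Finset.sum_const,
          nsmul_eq_mul, mul_one]
      have hineq : t < (T.card:ℝ) - ((nn:ℝ) - (n':ℝ))/2 := by
        have hflt : (m:ℝ)/2 + t < (k₀:ℝ) := by
          rw [hk₀_def]
          push_cast
          linarith [Nat.lt_floor_add_one ((m:ℝ)/2 + t)]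
        have hTc : (k₀:ℝ) ≤ (T.card:ℝ) := by exact_mod_cast hval1
        rw [← hmR]
        linarith
      show η * Real.sqrt (((γ:ℝ)^r/2) * Real.log (Real.log ((γ:ℝ)^r)))
          < blockIncr γ r X - (((γ^r : ℕ):ℝ) - ((γ^(r-1) : ℕ):ℝ))/2
      rw [hblock]
      exact hineq
    -- ## measure bound and transfer to ENNReal
    have hμlb := aux_measure_lb μ hμ s 𝒯 (fun T hT => (hTmem T hT).1)
      (lowerLILEvent η γ r) hsub
    rw [hscard] at hμlb
    refine lt_of_lt_of_le ?_ hμlb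
    have h2cast : ((1:ENNReal)/2)^m = ENNReal.ofReal (((1:ℝ)/2)^m) := by
      rw [ENNReal.ofReal_pow (by norm_num)]
      congr 1
      rw [ENNReal.ofReal_div_of_pos (by norm_num)]
      simp
    have hcast3 : (𝒯.card:ENNReal) = ENNReal.ofReal (𝒯.card) := by
      rw [ENNReal.ofReal_natCast]
    have hrcast : 1/((r:ℕ):ENNReal) = ENNReal.ofReal (1/(r:ℝ)) := by
      rw [one_div, one_div, ENNReal.ofReal_inv_of_pos hrRpos, ENNReal.ofReal_natCast]
    rw [hrcast, h2cast, hcast3, ← ENNReal.ofReal_mul (Nat.cast_nonneg 𝒯.card)]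
    refine (ENNReal.ofReal_lt_ofReal_iff ?_).mpr hreal
    exact lt_trans (by positivity) hreal
  exact eventually_atTop.mp main
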